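/- Let L be a field and G a finite group acting on the rational function field L(x₁,…,x_m) such that: (i) σ(L) ⊆ L for all σ ∈ G, (ii) the restriction of the G-action to L is faithful, and (iii) for each σ ∈ G the column vector (σ(x₁),…,σ(x_m))ᵗ equals A(σ)·(x₁,…,x_m)ᵗ + B(σ) for some A(σ) ∈ GL_m(L) and B(σ) an m×1 matrix over L. Then there exist z₁,…,z_m ∈ L(x₁,…,x_m) such that L(x₁,…,x_m) = L(z₁,…,z_m) and σ(z_j) = z_j for all σ ∈ G and all j. -/

import Mathlib

open Submodule in
theorem hk_span_fixed (L F : Type) [Field L] [Field F] [Algebra L F]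
    (G : Type) [Group G] [Finite G] (ρ : G →* (F ≃+* F))
    (σ : G → L → L)
    (hσ : ∀ g a, ρ g (algebraMap L F a) = algebraMap L F (σ g a))
    (hfaith : ∀ g : G, (∀ a : L, σ g a = a) → g = 1)
    (W : Submodule L F)
    (hW : ∀ (g : G), ∀ w ∈ W, ρ g w ∈ W) :
    W ≤ Submodule.span L {w | w ∈ W ∧ ∀ g : G, ρ g w = w} := by
  classical
  have := Fintype.ofFinite G
  set ι := algebraMap L F with hιdef
  have hι : Function.Injective ι := (algebraMap L F).injective
  have hmulapp : ∀ (g h : G) (v : F), ρ (g * h) v = ρ g (ρ h v) := by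
    intro g h v; rw [map_mul]; rfl
  have hcomp : ∀ (g h : G) (a : L), σ (g * h) a = σ g (σ h a) := by
    intro g h a
    apply hι
    rw [← hσ, hmulapp, hσ, hσ]
  have hone : ∀ a : L, σ 1 a = a := by
    intro a
    apply hι
    rw [← hσ, map_one]; rfl
  -- the characters
  have hmul' : ∀ (g : G) (a b : L), σ g (a * b) = σ g a * σ g b := by
    intro g a b
    apply hι
    rw [← hσ, map_mul, map_mul, hσ, hσ, map_mul]
  let χ : G → (L →* L) := fun g =>
    { toFun := σ g
      map_one' := by
        apply hι; rw [← hσ, map_one, map_one]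
      map_mul' := hmul' g }
  have hχinj : Function.Injective χ := by
    intro g h hgh
    have h1 : ∀ a, σ g a = σ h a := fun a => congrFun (congrArg (fun f => f.toFun) hgh) a
    have h2 : ∀ a : L, σ (h⁻¹ * g) a = a := by
      intro a
      rw [hcomp, h1, ← hcomp, inv_mul_cancel, hone]
    have := hfaith _ h2
    rwa [inv_mul_eq_one, eq_comm] at this
  have hLI : LinearIndependent L (fun g : G => ((χ g : L →* L) : L → L)) :=
    (linearIndependent_monoidHom L L).comp χ hχinj
  -- main argument
  intro w₀ hw₀
  by_contra hns
  set S : Set F := {w | w ∈ W ∧ ∀ g : G, ρ g w = w} with hSdef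
  set U : Submodule L W := (Submodule.span L S).comap W.subtype with hUdef
  set wb : W := ⟨w₀, hw₀⟩ with hwbdef
  have hmkQ : U.mkQ wb ≠ 0 := by
    simp only [Submodule.mkQ_apply, ne_eq, Submodule.Quotient.mk_eq_zero]
    exact hns
  obtain ⟨φ, hφ⟩ : ∃ φ : Module.Dual L (W ⧸ U), φ (U.mkQ wb) ≠ 0 := by
    by_contra hc
    push_neg at hc
    exact hmkQ ((Module.forall_dual_apply_eq_zero_iff L _).mp hc)
  set f : W →ₗ[L] L := φ ∘ₗ U.mkQ with hfdef
  have hfU : ∀ w : W, (w : F) ∈ Submodule.span L S → f w = 0 := by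
    intro w hw
    have : U.mkQ w = 0 := by
      rw [Submodule.mkQ_apply, Submodule.Quotient.mk_eq_zero]
      exact hw
    simp [hfdef, this]
  set c : G → L := fun g => f ⟨ρ g w₀, hW g w₀ hw₀⟩ with hcdef
  have key : ∀ a : L, ∑ g : G, c g * σ g a = 0 := by
    intro a
    set T : W := ∑ g : G, σ g a • (⟨ρ g w₀, hW g w₀ hw₀⟩ : W) with hTdef
    have hTF : (T : F) = ∑ g : G, ρ g (ι a * w₀) := by
      rw [hTdef]
      push_cast
      refine Finset.sum_congr rfl fun g _ => ?_
      rw [map_mul, hσ, Algebra.smul_def]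
    have hTfix : ∀ h : G, ρ h (T : F) = (T : F) := by
      intro h
      rw [hTF, map_sum]
      rw [← Equiv.sum_comp (Equiv.mulLeft h) (fun g => ρ g (ι a * w₀))]
      refine Finset.sum_congr rfl fun g _ => ?_
      rw [← hmulapp]
      rfl
    have hTS : (T : F) ∈ Submodule.span L S := by
      refine Submodule.subset_span ⟨T.2, hTfix⟩
    have := hfU T hTS
    rw [hTdef, map_sum] at this
    rw [← this]
    refine Finset.sum_congr rfl fun g _ => ?_
    rw [map_smul, smul_eq_mul, mul_comm]
  have hczero : ∀ g : G, c g = 0 := by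
    have hsum : ∑ g : G, c g • ((χ g : L →* L) : L → L) = 0 := by
      funext a
      have := key a
      simpa [Finset.sum_apply, χ] using key a
    exact Fintype.linearIndependent_iff.mp hLI c hsum
  have hc1 : c 1 = f wb := by
    have he : (⟨ρ 1 w₀, hW 1 w₀ hw₀⟩ : W) = wb := by
      apply Subtype.ext
      show ρ 1 w₀ = w₀
      rw [map_one]; rfl
    show f ⟨ρ 1 w₀, hW 1 w₀ hw₀⟩ = f wb
    rw [he]
  have : f wb ≠ 0 := hφ
  rw [← hc1] at this
  exact this (hczero 1)


open Submodule Set in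
theorem hk_select (L V : Type) [Field L] [AddCommGroup V] [Module L V]
    (m : ℕ) (S : Set V) (y : Fin (m+1) → V)
    (h0S : y 0 ∈ S) (h0ne : y 0 ≠ 0)
    (hy : ∀ i, y i ∈ Submodule.span L S)
    (hS : S ⊆ (Submodule.span L (Set.range y) : Set V)) :
    ∃ z : Fin m → V, (∀ j, z j ∈ S ∨ z j = 0) ∧
      ∀ i, y i ∈ Submodule.span L (insert (y 0) (Set.range z)) := by
  classical
  obtain ⟨b, hbt, hsb, htb, hbli⟩ :=
    exists_linearIndepOn_id_extension ((linearIndepOn_singleton_iff (R := L) (v := id)).mpr h0ne)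
      (Set.singleton_subset_iff.mpr h0S)
  replace hbli := hbli.linearIndependent
  have hfinR : Finite ↑(Set.range y) := (Set.finite_range y).to_subtype
  have hble : Set.range (Subtype.val : b → V) ≤ Submodule.span L (Set.range y) := by
    rw [Subtype.range_coe]
    intro v hv
    exact Submodule.span_le.mpr hS (Submodule.subset_span (hbt hv))
  have hbfin : Finite ↑b := hbli.finite_of_le_span_finite _ (Set.range y) hble
  letI := Fintype.ofFinite ↑b
  letI := Fintype.ofFinite ↑(Set.range y)
  have hcard : Fintype.card ↑b ≤ m + 1 := by
    have h1 := linearIndependent_le_span' _ hbli (Set.range y) hble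
    rw [Cardinal.mk_fintype, Nat.cast_le] at h1
    exact h1.trans (by simpa using Fintype.card_range_le y)
  set b' : Set V := b \ {y 0} with hb'def
  letI : Fintype ↑b' := Set.Finite.fintype (Set.Finite.diff (Set.toFinite b))
  have hb'card : Fintype.card ↑b' ≤ m := by
    have hlt : b' ⊂ b := Set.ssubset_iff_of_subset Set.diff_subset |>.mpr
      ⟨y 0, hsb rfl, fun h => h.2 rfl⟩
    have := Set.card_lt_card hlt
    omega
  obtain ⟨emb⟩ : Nonempty (↑b' ↪ Fin m) := by
    apply Function.Embedding.nonempty_of_card_le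
    simpa using hb'card
  set z : Fin m → V := Function.extend emb Subtype.val (fun _ => 0) with hzdef
  refine ⟨z, ?_, ?_⟩
  · intro j
    rw [hzdef, Function.extend_def]
    split
    · next h => exact Or.inl (hbt (h.choose.2.1))
    · exact Or.inr rfl
  · intro i
    have hbsub : b ⊆ insert (y 0) (Set.range z) := by
      intro v hv
      by_cases hv0 : v = y 0
      · exact hv0 ▸ Set.mem_insert _ _
      · refine Set.mem_insert_of_mem _ ⟨emb ⟨v, hv, hv0⟩, ?_⟩
        rw [hzdef]
        exact emb.injective.extend_apply _ _ _
    have h1 : y i ∈ Submodule.span L b := by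
      refine Submodule.span_le.mpr ?_ (hy i)
      intro v hv
      exact htb hv
    exact Submodule.span_mono hbsub h1

open MvPolynomial in
theorem hk_adjoin_top (L : Type) [Field L] (m : ℕ)
    (E : IntermediateField L (FractionRing (MvPolynomial (Fin m) L)))
    (hx : ∀ i : Fin m, algebraMap (MvPolynomial (Fin m) L)
      (FractionRing (MvPolynomial (Fin m) L)) (MvPolynomial.X i) ∈ E) :
    E = ⊤ := by
  set F := FractionRing (MvPolynomial (Fin m) L) with hF
  set κ := algebraMap (MvPolynomial (Fin m) L) F with hκ
  have hpoly : ∀ p : MvPolynomial (Fin m) L, κ p ∈ E := by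
    intro p
    induction p using MvPolynomial.induction_on with
    | C a =>
      have h1 : κ (MvPolynomial.C a) = algebraMap L F a := by
        rw [IsScalarTower.algebraMap_apply L (MvPolynomial (Fin m) L) F, MvPolynomial.algebraMap_eq]
      rw [h1]
      exact E.algebraMap_mem a
    | add p q hp hq => rw [RingHom.map_add]; exact add_mem hp hq
    | mul_X p i hp => rw [RingHom.map_mul]; exact mul_mem hp (hx i)
  rw [eq_top_iff]
  rintro v -
  obtain ⟨p, q, hq, rfl⟩ := IsFractionRing.div_surjective (A := MvPolynomial (Fin m) L) v
  exact div_mem (hpoly p) (hpoly q)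

set_option maxHeartbeats 1000000 in
set_option synthInstance.maxHeartbeats 1000000 in
/-- Hajja–Kang linearization: if a finite group G acts on the
rational function field L(x₁,…,x_m) by field automorphisms which stabilize L,
restrict faithfully to L, and act affine-linearly on the variables, then there
exist z₁,…,z_m fixed by G with L(x₁,…,x_m) = L(z₁,…,z_m). -/
theorem hajja_kang_linearization (L : Type) [Field L] (m : ℕ) (G : Type)
    [Group G] [Finite G]
    (ρ : G →* (FractionRing (MvPolynomial (Fin m) L) ≃+*
      FractionRing (MvPolynomial (Fin m) L)))
    (hstab : ∀ (g : G) (a : L),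
      ∃ b : L, ρ g (algebraMap L (FractionRing (MvPolynomial (Fin m) L)) a) =
        algebraMap L (FractionRing (MvPolynomial (Fin m) L)) b)
    (hfaithful : ∀ g : G,
      (∀ a : L, ρ g (algebraMap L (FractionRing (MvPolynomial (Fin m) L)) a) =
        algebraMap L (FractionRing (MvPolynomial (Fin m) L)) a) → g = 1)
    (haffine : ∀ g : G, ∃ (A : Matrix (Fin m) (Fin m) L) (B : Fin m → L),
      IsUnit A.det ∧ ∀ i : Fin m,
        ρ g (algebraMap (MvPolynomial (Fin m) L)
            (FractionRing (MvPolynomial (Fin m) L)) (MvPolynomial.X i)) =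
          ∑ j : Fin m, algebraMap L (FractionRing (MvPolynomial (Fin m) L)) (A i j) *
            algebraMap (MvPolynomial (Fin m) L)
              (FractionRing (MvPolynomial (Fin m) L)) (MvPolynomial.X j) +
            algebraMap L (FractionRing (MvPolynomial (Fin m) L)) (B i)) :
    ∃ z : Fin m → FractionRing (MvPolynomial (Fin m) L),
      (∀ (g : G) (j : Fin m), ρ g (z j) = z j) ∧
      IntermediateField.adjoin L (Set.range z) = ⊤ := by
  classical
  let F := FractionRing (MvPolynomial (Fin m) L)
  let ι : L →+* F := algebraMap L F
  let κ : MvPolynomial (Fin m) L →+* F := algebraMap (MvPolynomial (Fin m) L) F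
  let σ : G → L → L := fun g a => (hstab g a).choose
  have hσ : ∀ (g : G) (a : L), ρ g (ι a) = ι (σ g a) := fun g a => (hstab g a).choose_spec
  have hι : Function.Injective ι := (algebraMap L F).injective
  have hfaith' : ∀ g : G, (∀ a : L, σ g a = a) → g = 1 := by
    intro g hg
    apply hfaithful
    intro a
    rw [hσ g a, hg a]
  let x : Fin m → F := fun i => κ (MvPolynomial.X i)
  let y : Fin (m+1) → F := Fin.cons 1 x
  let W : Submodule L F := Submodule.span L (Set.range y)
  have hy0 : y 0 = 1 := Fin.cons_zero _ _
  have hys : ∀ i : Fin m, y i.succ = x i := fun i => Fin.cons_succ _ _ _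
  have h1W : (1 : F) ∈ W := Submodule.subset_span ⟨0, hy0⟩
  have hxW : ∀ i, x i ∈ W := fun i => Submodule.subset_span ⟨i.succ, hys i⟩
  have hWst : ∀ (g : G), ∀ w ∈ W, ρ g w ∈ W := by
    intro g w hw
    induction hw using Submodule.span_induction with
    | mem v hv =>
      obtain ⟨i, rfl⟩ := hv
      induction i using Fin.cases with
      | zero =>
        rw [hy0, map_one]
        exact h1W
      | succ i =>
        rw [hys]
        obtain ⟨A, B, -, hAB⟩ := haffine g
        rw [show (ρ g) (x i) = _ from hAB i]
        refine Submodule.add_mem _ (Submodule.sum_mem _ fun j _ => ?_) ?_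
        · rw [show (ι (A i j) * x j : F) = A i j • x j from (Algebra.smul_def _ _).symm]
          exact Submodule.smul_mem _ _ (hxW j)
        · rw [show (ι (B i) : F) = B i • 1 from by rw [Algebra.smul_def, mul_one]]
          exact Submodule.smul_mem _ _ h1W
    | zero => rw [map_zero]; exact Submodule.zero_mem _
    | add u v _ _ hu hv => rw [map_add]; exact Submodule.add_mem _ hu hv
    | smul a v _ hv =>
      rw [Algebra.smul_def, map_mul, hσ]
      rw [show (ι (σ g a) * (ρ g) v : F) = σ g a • (ρ g) v from (Algebra.smul_def _ _).symm]
      exact Submodule.smul_mem _ _ hv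
  set S : Set F := {w | w ∈ W ∧ ∀ g : G, ρ g w = w} with hSdef
  have hspanS : W ≤ Submodule.span L S := hk_span_fixed L F G ρ σ hσ hfaith' W hWst
  have h0S : y 0 ∈ S := by
    refine ⟨?_, ?_⟩
    · rw [hy0]; exact h1W
    · intro g; rw [hy0, map_one]
  have h0ne : y 0 ≠ 0 := by
    rw [hy0]; exact one_ne_zero
  obtain ⟨z, hzS, hzspan⟩ := hk_select L F m S y h0S h0ne
    (fun i => hspanS (Submodule.subset_span ⟨i, rfl⟩)) (fun w hw => hw.1)
  refine ⟨z, ?_, ?_⟩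
  · intro g j
    rcases hzS j with h | h
    · exact h.2 g
    · rw [h, map_zero]
  · apply hk_adjoin_top
    intro i
    set E := IntermediateField.adjoin L (Set.range z) with hE
    have hsub : insert (y 0) (Set.range z) ⊆ (E : Set F) := by
      refine Set.insert_subset ?_ ?_
      · rw [hy0]; exact one_mem E
      · exact IntermediateField.subset_adjoin L _
    have hsp : Submodule.span L (insert (y 0) (Set.range z)) ≤
        Subalgebra.toSubmodule E.toSubalgebra := Submodule.span_le.mpr hsub
    have := hsp (hzspan i.succ)
    rw [hys] at this
    exact this
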